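/- arXiv:2104.02351 — 2 statements merged into one kernel-verified Lean document; each statement's English description precedes it below -/
import Mathlib

section
/- Let μ > 2 and let g : (0,∞) → ℝ be a smooth function satisfying the boundary conditions (B) and having finite D_μ-norm. Then for every δ > 0 there exists a smooth function h compactly supported in (0,∞) such that ∫₀^∞ ((g−h)'')² x^{μ+1} dx + ∫₀^∞ ((g−h)')² (x+1) x^μ dx + ∫₀^∞ (g−h)² x^{μ−1} dx < δ. -/
open MeasureTheory Filter

noncomputable section

/-- `P₀[g] = ∫₀^∞ (g')² x^μ dx`. -/
def P0 (μ : ℝ) (g : ℝ → ℝ) : ℝ :=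
  ∫ x in Set.Ioi (0 : ℝ), (deriv g x) ^ 2 * x ^ μ

/-- `P₁[g] = ∫₀^∞ (x²(g')² − ε g²) x^{μ−1} dx`. -/
def P1 (μ ε : ℝ) (g : ℝ → ℝ) : ℝ :=
  ∫ x in Set.Ioi (0 : ℝ), (x ^ 2 * (deriv g x) ^ 2 - ε * (g x) ^ 2) * x ^ (μ - 1)

/-- `Q[g] = ∫₀^∞ (g'')² x^{μ+1} dx`. -/
def Q (μ : ℝ) (g : ℝ → ℝ) : ℝ :=
  ∫ x in Set.Ioi (0 : ℝ), (deriv (deriv g) x) ^ 2 * x ^ (μ + 1)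

/-- The boundary conditions (B): `limsup_{x→0}(|g|+|g'|) < ∞` and
`x^{μ+1} g'(x)² + x^μ g(x)² → 0` as `x → ∞`. -/
def BoundaryB (μ : ℝ) (g : ℝ → ℝ) : Prop :=
  (∃ M : ℝ, ∀ᶠ x in nhdsWithin 0 (Set.Ioi (0 : ℝ)), |g x| + |deriv g x| ≤ M) ∧
    Tendsto (fun x : ℝ => x ^ (μ + 1) * (deriv g x) ^ 2 + x ^ μ * (g x) ^ 2)
      atTop (nhds 0)

/-- `g` has finite `D_μ`-norm. -/
def FiniteDmu (μ : ℝ) (g : ℝ → ℝ) : Prop :=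
  IntegrableOn (fun x => (deriv (deriv g) x) ^ 2 * x ^ (μ + 1)) (Set.Ioi 0) volume ∧
    IntegrableOn (fun x => (deriv g x) ^ 2 * (x + 1) * x ^ μ) (Set.Ioi 0) volume ∧
    IntegrableOn (fun x => (g x) ^ 2 * x ^ (μ - 1)) (Set.Ioi 0) volume

set_option maxHeartbeats 2000000

namespace Stmt18Aux


open Set Real


/-! ### Derivatives of the smooth transition function -/

def pST : ℝ → ℝ := deriv Real.smoothTransition
def qST : ℝ → ℝ := deriv pST

lemma contDiff_pST : ContDiff ℝ (⊤ : ℕ∞) pST :=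
  (contDiff_infty_iff_deriv.mp (Real.smoothTransition.contDiff (n := ⊤))).2

lemma contDiff_qST : ContDiff ℝ (⊤ : ℕ∞) qST :=
  (contDiff_infty_iff_deriv.mp contDiff_pST).2

lemma pST_eq_zero {x : ℝ} (hx : x ≤ 0 ∨ 1 ≤ x) : pST x = 0 := by
  have h1 : Set.EqOn pST 0 (Set.Iio 0) := by
    intro y hy
    have : Real.smoothTransition =ᶠ[nhds y] fun _ => 0 := by
      filter_upwards [Iio_mem_nhds (show y < 0 from hy)] with z hz
      exact Real.smoothTransition.zero_of_nonpos (le_of_lt hz)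
    simp [pST, this.deriv_eq, deriv_const]
  have h2 : Set.EqOn pST 0 (Set.Ioi 1) := by
    intro y hy
    have : Real.smoothTransition =ᶠ[nhds y] fun _ => 1 := by
      filter_upwards [Ioi_mem_nhds (show 1 < y from hy)] with z hz
      exact Real.smoothTransition.one_of_one_le (le_of_lt hz)
    simp [pST, this.deriv_eq, deriv_const]
  have hc : Continuous pST := contDiff_pST.continuous
  rcases hx with hx | hx
  · have := (h1.closure hc continuous_const) (by simpa [closure_Iio] using hx)
    simpa using this
  · have := (h2.closure hc continuous_const) (by simpa [closure_Ioi] using hx)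
    simpa using this

lemma qST_eq_zero {x : ℝ} (hx : x ≤ 0 ∨ 1 ≤ x) : qST x = 0 := by
  have h1 : Set.EqOn qST 0 (Set.Iio 0) := by
    intro y hy
    have : pST =ᶠ[nhds y] fun _ => 0 := by
      filter_upwards [Iio_mem_nhds (show y < 0 from hy)] with z hz
      exact pST_eq_zero (Or.inl hz.le)
    simp [qST, this.deriv_eq, deriv_const]
  have h2 : Set.EqOn qST 0 (Set.Ioi 1) := by
    intro y hy
    have : pST =ᶠ[nhds y] fun _ => 0 := by
      filter_upwards [Ioi_mem_nhds (show 1 < y from hy)] with z hz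
      exact pST_eq_zero (Or.inr hz.le)
    simp [qST, this.deriv_eq, deriv_const]
  have hc : Continuous qST := contDiff_qST.continuous
  rcases hx with hx | hx
  · have := (h1.closure hc continuous_const) (by simpa [closure_Iio] using hx)
    simpa using this
  · have := (h2.closure hc continuous_const) (by simpa [closure_Ioi] using hx)
    simpa using this

lemma exists_bound_pq : ∃ C : ℝ, 0 ≤ C ∧ (∀ x, |pST x| ≤ C) ∧ (∀ x, |qST x| ≤ C) := by
  have hp : HasCompactSupport pST := by
    apply HasCompactSupport.intro (isCompact_Icc (a := (0:ℝ)) (b := 1))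
    intro x hx
    simp only [Set.mem_Icc, not_and_or, not_le] at hx
    exact pST_eq_zero (by rcases hx with h | h; exacts [Or.inl h.le, Or.inr h.le])
  have hq : HasCompactSupport qST := by
    apply HasCompactSupport.intro (isCompact_Icc (a := (0:ℝ)) (b := 1))
    intro x hx
    simp only [Set.mem_Icc, not_and_or, not_le] at hx
    exact qST_eq_zero (by rcases hx with h | h; exacts [Or.inl h.le, Or.inr h.le])
  obtain ⟨C1, hC1⟩ := hp.exists_bound_of_continuous contDiff_pST.continuous
  obtain ⟨C2, hC2⟩ := hq.exists_bound_of_continuous contDiff_qST.continuous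
  refine ⟨max (max C1 C2) 0, le_max_right _ _, fun x => ?_, fun x => ?_⟩
  · calc |pST x| = ‖pST x‖ := (Real.norm_eq_abs _).symm
      _ ≤ C1 := hC1 x
      _ ≤ _ := le_max_of_le_left (le_max_left _ _)
  · calc |qST x| = ‖qST x‖ := (Real.norm_eq_abs _).symm
      _ ≤ C2 := hC2 x
      _ ≤ _ := le_max_of_le_left (le_max_right _ _)

lemma hasDerivAt_ST (t : ℝ) : HasDerivAt Real.smoothTransition (pST t) t :=
  ((Real.smoothTransition.contDiff (n := ⊤)).differentiable
    (by simp) t).hasDerivAt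

lemma hasDerivAt_pST (t : ℝ) : HasDerivAt pST (qST t) t :=
  (contDiff_pST.differentiable (by simp) t).hasDerivAt

/-! ### The cutoff function -/

def c1 (ε : ℝ) : ℝ → ℝ := fun y => Real.smoothTransition ((y - ε)/ε)
def c2 (R : ℝ) : ℝ → ℝ := fun y => Real.smoothTransition ((2*R - y)/R)
def c1d (ε : ℝ) : ℝ → ℝ := fun y => pST ((y - ε)/ε) * ε⁻¹
def c2d (R : ℝ) : ℝ → ℝ := fun y => pST ((2*R - y)/R) * (-R⁻¹)
def c1dd (ε : ℝ) : ℝ → ℝ := fun y => qST ((y - ε)/ε) * ε⁻¹ * ε⁻¹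
def c2dd (R : ℝ) : ℝ → ℝ := fun y => qST ((2*R - y)/R) * (-R⁻¹) * (-R⁻¹)

lemma hasDerivAt_i1 (ε y : ℝ) : HasDerivAt (fun y => (y - ε)/ε) ε⁻¹ y := by
  simpa [div_eq_mul_inv] using ((hasDerivAt_id y).sub_const ε).div_const ε

lemma hasDerivAt_i2 (R y : ℝ) : HasDerivAt (fun y => (2*R - y)/R) (-R⁻¹) y := by
  simpa [div_eq_mul_inv] using ((hasDerivAt_id y).const_sub (2*R)).div_const R

lemma hasDerivAt_c1 (ε y : ℝ) : HasDerivAt (c1 ε) (c1d ε y) y :=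
  (hasDerivAt_ST _).comp y (hasDerivAt_i1 ε y)

lemma hasDerivAt_c2 (R y : ℝ) : HasDerivAt (c2 R) (c2d R y) y :=
  (hasDerivAt_ST _).comp y (hasDerivAt_i2 R y)

lemma hasDerivAt_c1d (ε y : ℝ) : HasDerivAt (c1d ε) (c1dd ε y) y :=
  (((hasDerivAt_pST _).comp y (hasDerivAt_i1 ε y)).mul_const ε⁻¹)

lemma hasDerivAt_c2d (R y : ℝ) : HasDerivAt (c2d R) (c2dd R y) y :=
  (((hasDerivAt_pST _).comp y (hasDerivAt_i2 R y)).mul_const (-R⁻¹))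

def ψ (ε R : ℝ) : ℝ → ℝ := fun y => 1 - c1 ε y * c2 R y
def ψd (ε R : ℝ) : ℝ → ℝ := fun y => -(c1d ε y * c2 R y + c1 ε y * c2d R y)
def ψdd (ε R : ℝ) : ℝ → ℝ :=
  fun y => -(c1dd ε y * c2 R y + 2 * (c1d ε y * c2d R y) + c1 ε y * c2dd R y)

lemma hasDerivAt_ψ (ε R y : ℝ) : HasDerivAt (ψ ε R) (ψd ε R y) y :=
  ((hasDerivAt_c1 ε y).mul (hasDerivAt_c2 R y)).const_sub 1

lemma hasDerivAt_ψd (ε R y : ℝ) : HasDerivAt (ψd ε R) (ψdd ε R y) y := by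
  have h1 := (hasDerivAt_c1d ε y).mul (hasDerivAt_c2 R y)
  have h2 := (hasDerivAt_c1 ε y).mul (hasDerivAt_c2d R y)
  have := (h1.add h2).neg
  have e : ψdd ε R y = -(c1dd ε y * c2 R y + c1d ε y * c2d R y
      + (c1d ε y * c2d R y + c1 ε y * c2dd R y)) := by
    simp only [ψdd]; ring
  rw [e]; exact this

lemma ψ_mem (ε R y : ℝ) : 0 ≤ ψ ε R y ∧ ψ ε R y ≤ 1 := by
  constructor
  · have := mul_le_one₀ (Real.smoothTransition.le_one ((y-ε)/ε))
      (Real.smoothTransition.nonneg _) (Real.smoothTransition.le_one ((2*R-y)/R))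
    simp only [ψ, c1, c2]; linarith
  · have := mul_nonneg (Real.smoothTransition.nonneg ((y-ε)/ε))
      (Real.smoothTransition.nonneg ((2*R-y)/R))
    simp only [ψ, c1, c2]; linarith

lemma zoneA_c2 {R : ℝ} (hR : 1 ≤ R) {x : ℝ} (hx : x ≤ R) :
    c2 R x = 1 ∧ c2d R x = 0 ∧ c2dd R x = 0 := by
  have hR0 : (0:ℝ) < R := lt_of_lt_of_le one_pos hR
  have harg : 1 ≤ (2*R - x)/R := by
    rw [le_div_iff₀ hR0]; linarith
  exact ⟨Real.smoothTransition.one_of_one_le harg,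
    by simp [c2d, pST_eq_zero (Or.inr harg)],
    by simp [c2dd, qST_eq_zero (Or.inr harg)]⟩

lemma zoneC_c1 {ε : ℝ} (hε : 0 < ε) {x : ℝ} (hx : 2*ε ≤ x) :
    c1 ε x = 1 ∧ c1d ε x = 0 ∧ c1dd ε x = 0 := by
  have harg : 1 ≤ (x - ε)/ε := by rw [le_div_iff₀ hε]; linarith
  exact ⟨Real.smoothTransition.one_of_one_le harg,
    by simp [c1d, pST_eq_zero (Or.inr harg)],
    by simp [c1dd, qST_eq_zero (Or.inr harg)]⟩

lemma zoneB {ε R : ℝ} (hε : 0 < ε) (hR : 1 ≤ R) (x : ℝ) (h1 : 2*ε ≤ x) (h2 : x ≤ R) :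
    ψ ε R x = 0 ∧ ψd ε R x = 0 ∧ ψdd ε R x = 0 := by
  obtain ⟨a1, a2, a3⟩ := zoneA_c2 hR h2
  obtain ⟨b1, b2, b3⟩ := zoneC_c1 hε h1
  refine ⟨?_, ?_, ?_⟩ <;> simp [ψ, ψd, ψdd, a1, a2, a3, b1, b2, b3]

/-! ### Tail integrals tend to zero -/

lemma head_tendsto {f : ℝ → ℝ} (hf : IntegrableOn f (Set.Ioi 0)) :
    Tendsto (fun a => ∫ x in Set.Ioc 0 a, f x) (nhdsWithin 0 (Set.Ioi 0)) (nhds 0) := by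
  have key : Tendsto (fun a => ∫ x in Set.Ioi (0:ℝ), (Set.Ioc 0 a).indicator f x)
      (nhdsWithin 0 (Set.Ioi 0)) (nhds (∫ _ in Set.Ioi (0:ℝ), (0:ℝ))) := by
    apply tendsto_integral_filter_of_dominated_convergence (fun x => |f x|)
    · exact Eventually.of_forall fun a =>
        (hf.aestronglyMeasurable.indicator measurableSet_Ioc)
    · exact Eventually.of_forall fun a => Eventually.of_forall fun x => by
        rw [Real.norm_eq_abs]
        by_cases hx : x ∈ Set.Ioc 0 a <;> simp [Set.indicator_of_mem, hx, abs_nonneg]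
    · exact hf.abs
    · rw [ae_restrict_iff' measurableSet_Ioi]
      refine Eventually.of_forall fun x hx => ?_
      have : ∀ᶠ a in nhdsWithin (0:ℝ) (Set.Ioi 0), x ∉ Set.Ioc 0 a := by
        have : ∀ᶠ a in nhdsWithin (0:ℝ) (Set.Ioi 0), a < x :=
          eventually_nhdsWithin_of_eventually_nhds
            (tendsto_id.eventually_lt_const hx)
        filter_upwards [this] with a ha
        simp [Set.mem_Ioc]; intro _; linarith
      apply Tendsto.congr' (by filter_upwards [this] with a ha; simp [ha]) tendsto_const_nhds
  simp only [integral_zero] at key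
  apply key.congr
  intro a
  rw [setIntegral_indicator measurableSet_Ioc]
  have h : Set.Ioi (0:ℝ) ∩ Set.Ioc 0 a = Set.Ioc 0 a :=
    Set.inter_eq_right.mpr (fun x hx => hx.1)
  rw [h]

lemma tail_tendsto {f : ℝ → ℝ} (hf : IntegrableOn f (Set.Ioi 0)) :
    Tendsto (fun R => ∫ x in Set.Ioi R, f x) atTop (nhds 0) := by
  have key : Tendsto (fun R => ∫ x in Set.Ioi (0:ℝ), (Set.Ioi R).indicator f x)
      atTop (nhds (∫ _ in Set.Ioi (0:ℝ), (0:ℝ))) := by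
    apply tendsto_integral_filter_of_dominated_convergence (fun x => |f x|)
    · exact Eventually.of_forall fun R =>
        (hf.aestronglyMeasurable.indicator measurableSet_Ioi)
    · exact Eventually.of_forall fun R => Eventually.of_forall fun x => by
        rw [Real.norm_eq_abs]
        by_cases hx : x ∈ Set.Ioi R <;> simp [hx, abs_nonneg]
    · exact hf.abs
    · refine Eventually.of_forall fun x => ?_
      have : ∀ᶠ R in (atTop : Filter ℝ), x ∉ Set.Ioi R := by
        filter_upwards [eventually_ge_atTop x] with R hR
        simp [Set.mem_Ioi]; linarith
      apply Tendsto.congr' (by filter_upwards [this] with R hR; simp [hR]) tendsto_const_nhds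
  simp only [integral_zero] at key
  apply key.congr'
  filter_upwards [eventually_ge_atTop (0:ℝ)] with R hR
  rw [setIntegral_indicator measurableSet_Ioi]
  have h : Set.Ioi (0:ℝ) ∩ Set.Ioi R = Set.Ioi R :=
    Set.inter_eq_right.mpr (fun x hx => lt_of_le_of_lt hR hx)
  rw [h]

/-! ### Arithmetic zone bounds -/

lemma sq_add_three (a b c : ℝ) : (a+b+c)^2 ≤ 3*a^2+3*b^2+3*c^2 := by
  nlinarith [sq_nonneg (a-b), sq_nonneg (a-c), sq_nonneg (b-c)]

lemma sq_le_of_abs_le {a b : ℝ} (h : |a| ≤ b) : a^2 ≤ b^2 := by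
  have := abs_le.mp h
  nlinarith [this.1, this.2]

lemma boundA (μ C M ε x : ℝ) (hμ : 2 < μ) (hC : 0 ≤ C) (hM : 0 ≤ M)
    (hε : 0 < ε) (hx : 0 < x) (hx2 : x ≤ 2*ε)
    (G0 G1 G2 Ψ0 Ψ1 Ψ2 : ℝ) (hG0 : |G0| ≤ M) (hG1 : |G1| ≤ M)
    (hΨ0 : |Ψ0| ≤ 1) (hΨ1 : |Ψ1| ≤ C*ε⁻¹) (hΨ2 : |Ψ2| ≤ C*(ε⁻¹*ε⁻¹)) :
    (G2*Ψ0 + 2*G1*Ψ1 + G0*Ψ2)^2 * x^(μ+1) + (G1*Ψ0 + G0*Ψ1)^2*((x+1)*x^μ)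
      + (G0*Ψ0)^2*x^(μ-1)
    ≤ 3*(G2^2*x^(μ+1)) + 2*(G1^2*((x+1)*x^μ)) + G0^2*x^(μ-1)
      + (3*M^2*(C*(ε⁻¹*ε⁻¹))^2 + 12*M^2*(C*ε⁻¹)^2) * (2*ε)^(μ+1)
      + 2*M^2*(C*ε⁻¹)^2 * ((2*ε+1)*(2*ε)^μ) := by
  have hw1 : (0:ℝ) ≤ x^(μ+1) := rpow_nonneg hx.le _
  have hw2 : (0:ℝ) ≤ (x+1)*x^μ := by positivity
  have hw3 : (0:ℝ) ≤ x^(μ-1) := rpow_nonneg hx.le _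
  have hW1 : x^(μ+1) ≤ (2*ε)^(μ+1) := rpow_le_rpow hx.le hx2 (by linarith)
  have hW2 : (x+1)*x^μ ≤ (2*ε+1)*(2*ε)^μ := by
    apply mul_le_mul (by linarith) (rpow_le_rpow hx.le hx2 (by linarith))
      (rpow_nonneg hx.le _) (by linarith)
  have hG0s : G0^2 ≤ M^2 := sq_le_of_abs_le hG0
  have hG1s : G1^2 ≤ M^2 := sq_le_of_abs_le hG1
  have hΨ0s : Ψ0^2 ≤ 1 := by simpa using sq_le_of_abs_le hΨ0
  have hΨ1s : Ψ1^2 ≤ (C*ε⁻¹)^2 := sq_le_of_abs_le hΨ1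
  have hΨ2s : Ψ2^2 ≤ (C*(ε⁻¹*ε⁻¹))^2 := sq_le_of_abs_le hΨ2
  have e1 : (G2*Ψ0 + 2*G1*Ψ1 + G0*Ψ2)^2
      ≤ 3*G2^2 + 12*(M^2*(C*ε⁻¹)^2) + 3*(M^2*(C*(ε⁻¹*ε⁻¹))^2) := by
    have h1 : (G2*Ψ0)^2 ≤ G2^2 := by
      rw [mul_pow]; exact mul_le_of_le_one_right (sq_nonneg _) hΨ0s
    have h2 : G1^2*Ψ1^2 ≤ M^2*(C*ε⁻¹)^2 :=
      mul_le_mul hG1s hΨ1s (sq_nonneg _) (by positivity)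
    have h3 : G0^2*Ψ2^2 ≤ M^2*(C*(ε⁻¹*ε⁻¹))^2 :=
      mul_le_mul hG0s hΨ2s (sq_nonneg _) (by positivity)
    have h4 := sq_add_three (G2*Ψ0) (2*G1*Ψ1) (G0*Ψ2)
    linarith [h1, h2, h3, h4]
  have e2 : (G1*Ψ0 + G0*Ψ1)^2 ≤ 2*G1^2 + 2*(M^2*(C*ε⁻¹)^2) := by
    have h1 : (G1*Ψ0)^2 ≤ G1^2 := by
      rw [mul_pow]; exact mul_le_of_le_one_right (sq_nonneg _) hΨ0s
    have h2 : G0^2*Ψ1^2 ≤ M^2*(C*ε⁻¹)^2 :=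
      mul_le_mul hG0s hΨ1s (sq_nonneg _) (by positivity)
    linarith [h1, h2, sq_nonneg (G1*Ψ0 - G0*Ψ1)]
  have e3 : (G0*Ψ0)^2 ≤ G0^2 := by
    rw [mul_pow]; exact mul_le_of_le_one_right (sq_nonneg _) hΨ0s
  have q1 := mul_le_mul_of_nonneg_right e1 hw1
  have q2 := mul_le_mul_of_nonneg_right e2 hw2
  have q3 := mul_le_mul_of_nonneg_right e3 hw3
  have p1 := mul_le_mul_of_nonneg_left hW1
    (by positivity : (0:ℝ) ≤ 12*(M^2*(C*ε⁻¹)^2) + 3*(M^2*(C*(ε⁻¹*ε⁻¹))^2))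
  have p2 := mul_le_mul_of_nonneg_left hW2
    (by positivity : (0:ℝ) ≤ 2*(M^2*(C*ε⁻¹)^2))
  linarith [q1, q2, q3, p1, p2]

lemma boundC (μ C x : ℝ) (hμ : 2 < μ) (hC : 0 ≤ C) (hx : 1 ≤ x)
    (G0 G1 G2 Ψ0 Ψ1 Ψ2 : ℝ)
    (hΨ0 : |Ψ0| ≤ 1) (hΨ1 : |Ψ1| ≤ 2*C/x) (hΨ2 : |Ψ2| ≤ 4*C/(x*x)) :
    (G2*Ψ0 + 2*G1*Ψ1 + G0*Ψ2)^2 * x^(μ+1) + (G1*Ψ0 + G0*Ψ1)^2*((x+1)*x^μ)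
      + (G0*Ψ0)^2*x^(μ-1)
    ≤ (64*C^2+3) * ((G2^2*x^(μ+1)) + (G1^2*((x+1)*x^μ)) + (G0^2*x^(μ-1))) := by
  have hx0 : (0:ℝ) < x := lt_of_lt_of_le one_pos hx
  have hne : x ≠ 0 := hx0.ne'
  have hw1 : (0:ℝ) ≤ x^(μ+1) := rpow_nonneg hx0.le _
  have hw2 : (0:ℝ) ≤ (x+1)*x^μ := by positivity
  have hw3 : (0:ℝ) ≤ x^(μ-1) := rpow_nonneg hx0.le _
  have hΨ0s : Ψ0^2 ≤ 1 := by simpa using sq_le_of_abs_le hΨ0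
  have hΨ1s : Ψ1^2 ≤ (2*C/x)^2 := sq_le_of_abs_le hΨ1
  have hΨ2s : Ψ2^2 ≤ (4*C/(x*x))^2 := sq_le_of_abs_le hΨ2
  have hxx1 : x^(μ-1)*x*x = x^(μ+1) := by
    rw [← Real.rpow_add_one hne, ← Real.rpow_add_one hne]; congr 1; ring
  have hxx0 : x^(μ-1)*x = x^μ := by
    rw [← Real.rpow_add_one hne]; congr 1; ring
  have hx13 : x^(μ+1) ≤ x^(μ+3) := rpow_le_rpow_of_exponent_le hx (by linarith)
  have hxx3 : x^(μ-1)*x*x*x*x = x^(μ+3) := by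
    rw [← Real.rpow_add_one hne, ← Real.rpow_add_one hne, ← Real.rpow_add_one hne,
      ← Real.rpow_add_one hne]; congr 1; ring
  have hmono : x^(μ-1) ≤ (x+1)*x^μ := by
    have h1 : x^(μ-1) ≤ x^μ := rpow_le_rpow_of_exponent_le hx (by linarith)
    nlinarith [rpow_nonneg hx0.le μ]
  have t1 : (2*G1*Ψ1)^2 * x^(μ+1) ≤ 16*C^2*(G1^2*((x+1)*x^μ)) := by
    have h : (2*G1*Ψ1)^2 ≤ 4*G1^2*(2*C/x)^2 := by
      have : G1^2*Ψ1^2 ≤ G1^2*(2*C/x)^2 :=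
        mul_le_mul_of_nonneg_left hΨ1s (sq_nonneg _)
      nlinarith
    have h2 : (4*G1^2*(2*C/x)^2) * x^(μ+1) = 16*C^2*(G1^2*x^(μ-1)) := by
      rw [← hxx1]; field_simp; ring
    calc (2*G1*Ψ1)^2 * x^(μ+1) ≤ (4*G1^2*(2*C/x)^2) * x^(μ+1) :=
          mul_le_mul_of_nonneg_right h hw1
      _ = 16*C^2*(G1^2*x^(μ-1)) := h2
      _ ≤ 16*C^2*(G1^2*((x+1)*x^μ)) := by
          apply mul_le_mul_of_nonneg_left
            (mul_le_mul_of_nonneg_left hmono (sq_nonneg _)) (by positivity)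
  have t2 : (G0*Ψ2)^2 * x^(μ+1) ≤ 16*C^2*(G0^2*x^(μ-1)) := by
    have h : (G0*Ψ2)^2 ≤ G0^2*(4*C/(x*x))^2 := by
      rw [mul_pow]; exact mul_le_mul_of_nonneg_left hΨ2s (sq_nonneg _)
    have h3 : (G0^2*(4*C/(x*x))^2) * x^(μ+3) = 16*C^2*(G0^2*x^(μ-1)) := by
      rw [← hxx3]; field_simp; ring
    calc (G0*Ψ2)^2 * x^(μ+1) ≤ (G0^2*(4*C/(x*x))^2) * x^(μ+1) :=
          mul_le_mul_of_nonneg_right h hw1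
      _ ≤ (G0^2*(4*C/(x*x))^2) * x^(μ+3) :=
          mul_le_mul_of_nonneg_left hx13 (by positivity)
      _ = 16*C^2*(G0^2*x^(μ-1)) := h3
  have t3 : (G0*Ψ1)^2 * ((x+1)*x^μ) ≤ 8*C^2*(G0^2*x^(μ-1)) := by
    have h : (G0*Ψ1)^2 ≤ G0^2*(2*C/x)^2 := by
      rw [mul_pow]; exact mul_le_mul_of_nonneg_left hΨ1s (sq_nonneg _)
    have h4 : (G0^2*(2*C/x)^2) * ((x+1)*x^μ) = 4*C^2*G0^2*((x+1)/x)*x^(μ-1) := by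
      rw [← hxx0]; field_simp; ring
    have h5 : 4*C^2*G0^2*((x+1)/x)*x^(μ-1) ≤ 8*C^2*(G0^2*x^(μ-1)) := by
      have hq : (x+1)/x ≤ 2 := by rw [div_le_iff₀ hx0]; linarith
      have hnn : (0:ℝ) ≤ 4*C^2*G0^2*x^(μ-1) := by positivity
      nlinarith [mul_le_mul_of_nonneg_right hq hnn]
    calc (G0*Ψ1)^2 * ((x+1)*x^μ) ≤ (G0^2*(2*C/x)^2) * ((x+1)*x^μ) :=
          mul_le_mul_of_nonneg_right h hw2
      _ = 4*C^2*G0^2*((x+1)/x)*x^(μ-1) := h4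
      _ ≤ 8*C^2*(G0^2*x^(μ-1)) := h5
  have e1 : (G2*Ψ0 + 2*G1*Ψ1 + G0*Ψ2)^2 * x^(μ+1)
      ≤ 3*(G2^2*x^(μ+1)) + 48*C^2*(G1^2*((x+1)*x^μ)) + 48*C^2*(G0^2*x^(μ-1)) := by
    have h0 : (G2*Ψ0)^2*x^(μ+1) ≤ G2^2*x^(μ+1) := by
      apply mul_le_mul_of_nonneg_right _ hw1
      rw [mul_pow]; exact mul_le_of_le_one_right (sq_nonneg _) hΨ0s
    have hss := mul_le_mul_of_nonneg_right
      (sq_add_three (G2*Ψ0) (2*G1*Ψ1) (G0*Ψ2)) hw1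
    linarith [t1, t2, h0, hss]
  have e2 : (G1*Ψ0 + G0*Ψ1)^2*((x+1)*x^μ)
      ≤ 2*(G1^2*((x+1)*x^μ)) + 16*C^2*(G0^2*x^(μ-1)) := by
    have h0 : (G1*Ψ0)^2*((x+1)*x^μ) ≤ G1^2*((x+1)*x^μ) := by
      apply mul_le_mul_of_nonneg_right _ hw2
      rw [mul_pow]; exact mul_le_of_le_one_right (sq_nonneg _) hΨ0s
    have hsq : (G1*Ψ0 + G0*Ψ1)^2 ≤ 2*(G1*Ψ0)^2 + 2*(G0*Ψ1)^2 := by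
      nlinarith [sq_nonneg (G1*Ψ0 - G0*Ψ1)]
    have hss := mul_le_mul_of_nonneg_right hsq hw2
    linarith [t3, h0, hss]
  have e3 : (G0*Ψ0)^2*x^(μ-1) ≤ G0^2*x^(μ-1) := by
    apply mul_le_mul_of_nonneg_right _ hw3
    rw [mul_pow]; exact mul_le_of_le_one_right (sq_nonneg _) hΨ0s
  have n1 : (0:ℝ) ≤ G2^2*x^(μ+1) := mul_nonneg (sq_nonneg _) hw1
  have n2 : (0:ℝ) ≤ G1^2*((x+1)*x^μ) := mul_nonneg (sq_nonneg _) hw2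
  have n3 : (0:ℝ) ≤ G0^2*x^(μ-1) := mul_nonneg (sq_nonneg _) hw3
  have hC2 : (0:ℝ) ≤ C^2 := sq_nonneg C
  nlinarith [e1, e2, e3, mul_nonneg hC2 n1, mul_nonneg hC2 n2, mul_nonneg hC2 n3]

/-! ### The constant term tends to zero -/

lemma Kterm_tendsto (μ C M : ℝ) (hμ : 2 < μ) (hC : 0 ≤ C) (hM : 0 ≤ M) :
    Tendsto (fun ε : ℝ => ((3*M^2*(C*(ε⁻¹*ε⁻¹))^2 + 12*M^2*(C*ε⁻¹)^2) * (2*ε)^(μ+1)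
      + 2*M^2*(C*ε⁻¹)^2 * ((2*ε+1)*(2*ε)^μ)) * (2*ε))
      (nhdsWithin 0 (Set.Ioi 0)) (nhds 0) := by
  set B : ℝ := 30*M^2*C^2*2^(μ+1) + 12*M^2*C^2*2^μ with hB
  have htd : Tendsto (fun ε : ℝ => B * ε^(μ-2)) (nhdsWithin 0 (Set.Ioi 0)) (nhds 0) := by
    have hc : ContinuousAt (fun x : ℝ => x^(μ-2)) 0 :=
      Real.continuousAt_rpow_const 0 (μ-2) (Or.inr (by linarith))
    have := hc.tendsto
    rw [Real.zero_rpow (by linarith : μ-2 ≠ 0)] at this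
    have h2 := (this.mono_left (nhdsWithin_le_nhds (s := Set.Ioi 0))).const_mul B
    simpa using h2
  apply squeeze_zero' _ _ htd
  · filter_upwards [self_mem_nhdsWithin] with ε (hε : (0:ℝ) < ε)
    have h1 : (0:ℝ) ≤ 2*ε := by linarith
    apply mul_nonneg _ h1
    apply add_nonneg
    · exact mul_nonneg (by positivity) (rpow_nonneg h1 _)
    · exact mul_nonneg (by positivity)
        (mul_nonneg (by linarith) (rpow_nonneg h1 _))
  · filter_upwards [self_mem_nhdsWithin,
      eventually_nhdsWithin_of_eventually_nhds
        (Filter.Tendsto.eventually_lt_const one_pos tendsto_id)] with ε hε hε1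
    have hε0 : (0:ℝ) < ε := hε
    have hεne : ε ≠ 0 := hε0.ne'
    have hεle : ε ≤ 1 := le_of_lt hε1
    have hm1 : (2*ε)^(μ+1) = 2^(μ+1)*ε^(μ+1) := mul_rpow (by norm_num) hε0.le
    have hm0 : (2*ε)^μ = 2^μ*ε^μ := mul_rpow (by norm_num) hε0.le
    have ha1 : ε^(μ-2)*ε*ε*ε = ε^(μ+1) := by
      rw [← Real.rpow_add_one hεne, ← Real.rpow_add_one hεne, ← Real.rpow_add_one hεne]
      congr 1; ring
    have ha0 : ε^(μ-2)*ε*ε = ε^μ := by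
      rw [← Real.rpow_add_one hεne, ← Real.rpow_add_one hεne]; congr 1; ring
    set a := ε^(μ-2) with haa
    have han : (0:ℝ) ≤ a := rpow_nonneg hε0.le _
    set P : ℝ := 2^(μ+1) with hP
    set Q : ℝ := 2^μ with hQ
    have hPn : (0:ℝ) ≤ P := rpow_nonneg (by norm_num) _
    have hQn : (0:ℝ) ≤ Q := rpow_nonneg (by norm_num) _
    have hexpr : ((3*M^2*(C*(ε⁻¹*ε⁻¹))^2 + 12*M^2*(C*ε⁻¹)^2) * (2*ε)^(μ+1)
        + 2*M^2*(C*ε⁻¹)^2 * ((2*ε+1)*(2*ε)^μ)) * (2*ε)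
        = 6*M^2*C^2*P*a + 24*M^2*C^2*P*(a*ε^2) + 4*M^2*C^2*Q*((2*ε+1)*(a*ε)) := by
      rw [hm1, hm0, ← ha1, ← ha0]
      field_simp
      ring
    rw [hexpr]
    have k1 : a*ε ≤ a := by
      calc a*ε ≤ a*1 := mul_le_mul_of_nonneg_left hεle han
        _ = a := mul_one a
    have k2 : ε*(a*ε) ≤ a*ε := by
      have hnn : (0:ℝ) ≤ a*ε := mul_nonneg han hε0.le
      calc ε*(a*ε) = (a*ε)*ε := by ring
        _ ≤ (a*ε)*1 := mul_le_mul_of_nonneg_left hεle hnn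
        _ = a*ε := mul_one _
    have l1 : a*ε^2 ≤ a := by nlinarith [k1, k2]
    have l2 : (2*ε+1)*(a*ε) ≤ 3*a := by nlinarith [k1, k2, mul_nonneg han hε0.le]
    have c1 : (0:ℝ) ≤ M^2*C^2*P := by positivity
    have c2 : (0:ℝ) ≤ M^2*C^2*Q := by positivity
    have b1 := mul_le_mul_of_nonneg_left l1 (by positivity : (0:ℝ) ≤ 24*(M^2*C^2*P))
    have b2 := mul_le_mul_of_nonneg_left l2 (by positivity : (0:ℝ) ≤ 4*(M^2*C^2*Q))
    rw [hB]
    nlinarith [b1, b2]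

end Stmt18Aux

open Stmt18Aux in
/-- Density of compactly supported smooth functions in the `D_μ`-norm for `μ > 2`. -/
theorem stmt_18 (μ : ℝ) (hμ : 2 < μ)
    (g : ℝ → ℝ) (hg : ContDiffOn ℝ (⊤ : ℕ∞) g (Set.Ioi 0))
    (hB : BoundaryB μ g) (hD : FiniteDmu μ g) :
    ∀ δ : ℝ, 0 < δ → ∃ h : ℝ → ℝ,
      ContDiff ℝ (⊤ : ℕ∞) h ∧ HasCompactSupport h ∧ tsupport h ⊆ Set.Ioi 0 ∧
      (∫ x in Set.Ioi (0 : ℝ),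
          (deriv (deriv (fun y => g y - h y)) x) ^ 2 * x ^ (μ + 1)) +
        (∫ x in Set.Ioi (0 : ℝ),
          (deriv (fun y => g y - h y) x) ^ 2 * (x + 1) * x ^ μ) +
        (∫ x in Set.Ioi (0 : ℝ), (g x - h x) ^ 2 * x ^ (μ - 1)) < δ := by
  intro δ hδ
  obtain ⟨hQint, hPint, hIint⟩ := hD
  set J : ℝ → ℝ := fun x =>
    (deriv (deriv g) x) ^ 2 * x ^ (μ + 1) + (deriv g x) ^ 2 * (x + 1) * x ^ μ
      + (g x) ^ 2 * x ^ (μ - 1) with hJdef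
  have hJint : IntegrableOn J (Set.Ioi 0) volume := (hQint.add hPint).add hIint
  obtain ⟨C, hC0, hpC, hqC⟩ := Stmt18Aux.exists_bound_pq
  -- bound near zero
  obtain ⟨M₀, hM₀⟩ := hB.1
  rw [eventually_nhdsWithin_iff] at hM₀
  obtain ⟨a₀, ha₀pos, hMball⟩ := Metric.eventually_nhds_iff.mp hM₀
  set M : ℝ := max M₀ 0 with hMdef
  have hM0 : (0:ℝ) ≤ M := le_max_right _ _
  have hMg : ∀ x : ℝ, 0 < x → x < a₀ → |g x| ≤ M ∧ |deriv g x| ≤ M := by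
    intro x hx hxa
    have hd : dist x 0 < a₀ := by
      rw [Real.dist_eq, sub_zero, abs_of_pos hx]; exact hxa
    have hb := hMball hd hx
    constructor
    · calc |g x| ≤ M₀ := by have := abs_nonneg (deriv g x); linarith
        _ ≤ M := le_max_left _ _
    · calc |deriv g x| ≤ M₀ := by have := abs_nonneg (g x); linarith
        _ ≤ M := le_max_left _ _
  -- choose R
  have htail := (Stmt18Aux.tail_tendsto hJint).const_mul (64*C^2+3)
  rw [mul_zero] at htail
  obtain ⟨R, hRtail, hR1⟩ :=
    ((htail.eventually_lt_const (show (0:ℝ) < δ/2 by linarith)).and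
      (eventually_ge_atTop (1:ℝ))).exists
  -- choose ε
  have hmap : Tendsto (fun ε : ℝ => 2*ε) (nhdsWithin 0 (Set.Ioi 0))
      (nhdsWithin 0 (Set.Ioi 0)) := by
    apply tendsto_nhdsWithin_of_tendsto_nhds_of_eventually_within
    · have h2 : Tendsto (fun ε : ℝ => 2*ε) (nhds 0) (nhds (2*0)) :=
        tendsto_id.const_mul 2
      rw [mul_zero] at h2
      exact h2.mono_left nhdsWithin_le_nhds
    · filter_upwards [self_mem_nhdsWithin] with ε (hε : (0:ℝ) < ε)
      exact Set.mem_Ioi.mpr (by linarith)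
  have hhead := ((Stmt18Aux.head_tendsto hJint).comp hmap).const_mul 3
  rw [mul_zero] at hhead
  have hKt := Stmt18Aux.Kterm_tendsto μ C M hμ hC0 hM0
  have hev1 := hhead.eventually_lt_const (show (0:ℝ) < δ/4 by linarith)
  have hev2 := hKt.eventually_lt_const (show (0:ℝ) < δ/4 by linarith)
  have hev3 : ∀ᶠ ε in nhdsWithin (0:ℝ) (Set.Ioi 0), ε < a₀/2 :=
    eventually_nhdsWithin_of_eventually_nhds
      (tendsto_id.eventually_lt_const (by linarith : (0:ℝ) < a₀/2))
  have hev4 : ∀ᶠ ε in nhdsWithin (0:ℝ) (Set.Ioi 0), ε < 1/2 :=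
    eventually_nhdsWithin_of_eventually_nhds
      (tendsto_id.eventually_lt_const (by norm_num : (0:ℝ) < 1/2))
  obtain ⟨ε, ⟨⟨⟨hεhead, hεK⟩, hεa₀⟩, hεhalf⟩, hεmem⟩ :=
    ((((hev1.and hev2).and hev3).and hev4).and self_mem_nhdsWithin).exists
  have hε0 : (0:ℝ) < ε := hεmem
  have hε1 : 2*ε ≤ 1 := by linarith
  have h2εa₀ : 2*ε < a₀ := by linarith
  have h2εR : 2*ε ≤ R := le_trans hε1 hR1
  -- the function h
  set hfun : ℝ → ℝ := fun y => g y * (Stmt18Aux.c1 ε y * Stmt18Aux.c2 R y) with hhdef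
  have hR0 : (0:ℝ) < R := lt_of_lt_of_le one_pos hR1
  have hzero_lt : ∀ y : ℝ, y < ε → hfun y = 0 := by
    intro y hy
    have : Stmt18Aux.c1 ε y = 0 := by
      apply Real.smoothTransition.zero_of_nonpos
      apply div_nonpos_of_nonpos_of_nonneg <;> linarith
    simp [hhdef, this]
  have hzero_gt : ∀ y : ℝ, 2*R < y → hfun y = 0 := by
    intro y hy
    have : Stmt18Aux.c2 R y = 0 := by
      apply Real.smoothTransition.zero_of_nonpos
      apply div_nonpos_of_nonpos_of_nonneg <;> linarith
    simp [hhdef, this]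
  have hsupp : Function.support hfun ⊆ Set.Icc ε (2*R) := by
    intro y hy
    by_contra hmem
    simp only [Set.mem_Icc, not_and_or, not_le] at hmem
    rcases hmem with hm | hm
    · exact hy (hzero_lt y hm)
    · exact hy (hzero_gt y hm)
  have hcs : HasCompactSupport hfun := by
    apply HasCompactSupport.intro (isCompact_Icc (a := ε) (b := 2*R))
    intro x hx
    simp only [Set.mem_Icc, not_and_or, not_le] at hx
    rcases hx with hm | hm
    · exact hzero_lt x hm
    · exact hzero_gt x hm
  have htsupp : tsupport hfun ⊆ Set.Ioi 0 := by
    refine subset_trans (closure_minimal hsupp isClosed_Icc) (fun x hx => ?_)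
    exact lt_of_lt_of_le hε0 hx.1
  have hc1smooth : ContDiff ℝ (⊤ : ℕ∞) (Stmt18Aux.c1 ε) :=
    Real.smoothTransition.contDiff.comp ((contDiff_id.sub contDiff_const).div_const ε)
  have hc2smooth : ContDiff ℝ (⊤ : ℕ∞) (Stmt18Aux.c2 R) :=
    Real.smoothTransition.contDiff.comp ((contDiff_const.sub contDiff_id).div_const R)
  have hsmooth : ContDiff ℝ (⊤ : ℕ∞) hfun := by
    rw [contDiff_iff_contDiffAt]
    intro x
    by_cases hx : 0 < x
    · exact (hg.contDiffAt (Ioi_mem_nhds hx)).mul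
        (hc1smooth.contDiffAt.mul hc2smooth.contDiffAt)
    · apply ContDiffAt.congr_of_eventuallyEq (contDiffAt_const (c := (0:ℝ)))
      filter_upwards [Iio_mem_nhds (lt_of_le_of_lt (not_lt.mp hx) hε0)] with y hy
      exact hzero_lt y hy
  refine ⟨hfun, hsmooth, hcs, htsupp, ?_⟩
  -- setup u
  set u : ℝ → ℝ := fun y => g y - hfun y with hudef
  have hueq : ∀ y, u y = g y * Stmt18Aux.ψ ε R y := by
    intro y; simp only [hudef, hhdef, Stmt18Aux.ψ]; ring
  have hone : (1 : WithTop ℕ∞) ≤ ((⊤:ℕ∞) : WithTop ℕ∞) := by exact_mod_cast le_top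
  have hgdiff : ∀ x ∈ Set.Ioi (0:ℝ), HasDerivAt g (deriv g x) x := fun x hx =>
    ((hg.contDiffAt (Ioi_mem_nhds hx)).differentiableAt (by simp)).hasDerivAt
  have hgC' : ContDiffOn ℝ (⊤ : ℕ∞) (deriv g) (Set.Ioi 0) :=
    hg.deriv_of_isOpen isOpen_Ioi (le_of_eq rfl)
  have hg'diff : ∀ x ∈ Set.Ioi (0:ℝ), HasDerivAt (deriv g) (deriv (deriv g) x) x :=
    fun x hx => ((hgC'.contDiffAt (Ioi_mem_nhds hx)).differentiableAt (by simp)).hasDerivAt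
  have hud : ∀ x ∈ Set.Ioi (0:ℝ),
      HasDerivAt u (deriv g x * Stmt18Aux.ψ ε R x + g x * Stmt18Aux.ψd ε R x) x := by
    intro x hx
    have hder := (hgdiff x hx).mul (Stmt18Aux.hasDerivAt_ψ ε R x)
    have he : u = fun y => g y * Stmt18Aux.ψ ε R y := funext hueq
    rw [he]
    exact hder
  have hderiv1 : ∀ x ∈ Set.Ioi (0:ℝ),
      deriv u x = deriv g x * Stmt18Aux.ψ ε R x + g x * Stmt18Aux.ψd ε R x :=
    fun x hx => (hud x hx).deriv
  have hud2 : ∀ x ∈ Set.Ioi (0:ℝ),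
      deriv (deriv u) x = deriv (deriv g) x * Stmt18Aux.ψ ε R x
        + 2 * deriv g x * Stmt18Aux.ψd ε R x + g x * Stmt18Aux.ψdd ε R x := by
    intro x hx
    have hev : deriv u =ᶠ[nhds x]
        (fun y => deriv g y * Stmt18Aux.ψ ε R y + g y * Stmt18Aux.ψd ε R y) :=
      Filter.eventuallyEq_of_mem (Ioi_mem_nhds hx) (fun y hy => hderiv1 y hy)
    rw [hev.deriv_eq]
    have hd : HasDerivAt
        (fun y => deriv g y * Stmt18Aux.ψ ε R y + g y * Stmt18Aux.ψd ε R y)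
        ((deriv (deriv g) x * Stmt18Aux.ψ ε R x + deriv g x * Stmt18Aux.ψd ε R x)
          + (deriv g x * Stmt18Aux.ψd ε R x + g x * Stmt18Aux.ψdd ε R x)) x :=
      ((hg'diff x hx).mul (Stmt18Aux.hasDerivAt_ψ ε R x)).add
        ((hgdiff x hx).mul (Stmt18Aux.hasDerivAt_ψd ε R x))
    rw [hd.deriv]; ring
  -- constant and majorant
  set Kc : ℝ := (3*M^2*(C*(ε⁻¹*ε⁻¹))^2 + 12*M^2*(C*ε⁻¹)^2) * (2*ε)^(μ+1)
      + 2*M^2*(C*ε⁻¹)^2 * ((2*ε+1)*(2*ε)^μ) with hKcdef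
  have h2ε0 : (0:ℝ) ≤ 2*ε := by linarith
  have hKc0 : 0 ≤ Kc := by
    apply add_nonneg
    · exact mul_nonneg (by positivity) (Real.rpow_nonneg h2ε0 _)
    · exact mul_nonneg (by positivity)
        (mul_nonneg (by linarith) (Real.rpow_nonneg h2ε0 _))
  set Gb : ℝ → ℝ := fun x => (Set.Ioc 0 (2*ε)).indicator (fun x => 3 * J x + Kc) x
      + (Set.Ioi R).indicator (fun x => (64*C^2+3) * J x) x with hGbdef
  have hJnn : ∀ x : ℝ, 0 < x → 0 ≤ J x := by
    intro x hx
    have h1 : (0:ℝ) ≤ x ^ (μ+1) := Real.rpow_nonneg hx.le _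
    have h2 : (0:ℝ) ≤ x ^ μ := Real.rpow_nonneg hx.le _
    have h3 : (0:ℝ) ≤ x ^ (μ-1) := Real.rpow_nonneg hx.le _
    have h4 : (0:ℝ) ≤ x + 1 := by linarith
    simp only [hJdef]
    have := sq_nonneg (deriv (deriv g) x)
    have := sq_nonneg (deriv g x)
    have := sq_nonneg (g x)
    positivity
  have hGnn : ∀ x : ℝ, 0 ≤ Gb x := by
    intro x
    apply add_nonneg
    · apply Set.indicator_nonneg
      intro y hy
      exact add_nonneg (by linarith [hJnn y hy.1]) hKc0
    · apply Set.indicator_nonneg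
      intro y hy
      have hy0 : (0:ℝ) < y := lt_of_lt_of_le (lt_of_lt_of_le one_pos hR1) (le_of_lt hy)
      have := hJnn y hy0
      positivity
  -- the master pointwise bound
  have claim : ∀ x ∈ Set.Ioi (0:ℝ),
      (deriv (deriv u) x) ^ 2 * x ^ (μ + 1)
        + (deriv u x) ^ 2 * (x + 1) * x ^ μ
        + (u x) ^ 2 * x ^ (μ - 1) ≤ Gb x := by
    intro x hx
    have hx0 : (0:ℝ) < x := hx
    rw [hderiv1 x hx, hud2 x hx, hueq x]
    have hψ0 : |Stmt18Aux.ψ ε R x| ≤ 1 :=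
      abs_le.mpr ⟨by linarith [(Stmt18Aux.ψ_mem ε R x).1], (Stmt18Aux.ψ_mem ε R x).2⟩
    rcases le_or_gt x (2*ε) with hc | hc
    · -- zone A
      obtain ⟨hgxa, hgxb⟩ := hMg x hx0 (by linarith)
      obtain ⟨hc2v, hc2dv, hc2ddv⟩ := Stmt18Aux.zoneA_c2 hR1 (le_trans hc h2εR)
      have hψd : |Stmt18Aux.ψd ε R x| ≤ C*ε⁻¹ := by
        have heq : Stmt18Aux.ψd ε R x = -(pST ((x-ε)/ε) * ε⁻¹) := by
          simp [Stmt18Aux.ψd, Stmt18Aux.c1d, hc2v, hc2dv]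
        rw [heq, abs_neg, abs_mul, abs_inv, abs_of_pos hε0]
        exact mul_le_mul_of_nonneg_right (hpC _) (inv_nonneg.mpr hε0.le)
      have hψdd : |Stmt18Aux.ψdd ε R x| ≤ C*(ε⁻¹*ε⁻¹) := by
        have heq : Stmt18Aux.ψdd ε R x = -(qST ((x-ε)/ε) * ε⁻¹ * ε⁻¹) := by
          simp [Stmt18Aux.ψdd, Stmt18Aux.c1dd, hc2v, hc2dv, hc2ddv]
        rw [heq, abs_neg, abs_mul, abs_mul, abs_inv, abs_of_pos hε0]
        calc |qST ((x-ε)/ε)| * ε⁻¹ * ε⁻¹ ≤ C * ε⁻¹ * ε⁻¹ := by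
              apply mul_le_mul_of_nonneg_right _ (inv_nonneg.mpr hε0.le)
              exact mul_le_mul_of_nonneg_right (hqC _) (inv_nonneg.mpr hε0.le)
          _ = C*(ε⁻¹*ε⁻¹) := by ring
      have hbA := Stmt18Aux.boundA μ C M ε x hμ hC0 hM0 hε0 hx0 hc
        (g x) (deriv g x) (deriv (deriv g) x)
        (Stmt18Aux.ψ ε R x) (Stmt18Aux.ψd ε R x) (Stmt18Aux.ψdd ε R x)
        hgxa hgxb hψ0 hψd hψdd
      have hGbx : Gb x = 3 * J x + Kc := by
        simp only [hGbdef]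
        rw [Set.indicator_of_mem (Set.mem_Ioc.mpr ⟨hx0, hc⟩),
          Set.indicator_of_notMem (by simp only [Set.mem_Ioi, not_lt]; linarith)]
        ring
      rw [hGbx]
      simp only [hJdef, hKcdef]
      have hI1nn : (0:ℝ) ≤ (deriv g x)^2*((x+1)*x^μ) :=
        mul_nonneg (sq_nonneg _) (mul_nonneg (by linarith) (Real.rpow_nonneg hx0.le μ))
      have hI2nn : (0:ℝ) ≤ (g x)^2*x^(μ-1) :=
        mul_nonneg (sq_nonneg _) (Real.rpow_nonneg hx0.le (μ-1))
      linarith [hbA, hI1nn, hI2nn]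
    · rcases le_or_gt x R with hcR | hcR
      · -- zone B
        obtain ⟨hz0, hz1, hz2⟩ := Stmt18Aux.zoneB hε0 hR1 x (by linarith) hcR
        rw [hz0, hz1, hz2]
        have hGx := hGnn x
        linarith [hGx]
      · -- zone C
        have hx1 : (1:ℝ) ≤ x := le_trans hR1 hcR.le
        obtain ⟨hc1v, hc1dv, hc1ddv⟩ := Stmt18Aux.zoneC_c1 hε0 (by linarith : 2*ε ≤ x)
        have h2Cx : (0:ℝ) ≤ 2*C/x := by positivity
        have h4Cx : (0:ℝ) ≤ 4*C/(x*x) := by positivity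
        have hψd : |Stmt18Aux.ψd ε R x| ≤ 2*C/x := by
          have heq : Stmt18Aux.ψd ε R x = pST ((2*R-x)/R) * R⁻¹ := by
            simp [Stmt18Aux.ψd, Stmt18Aux.c2d, hc1v, hc1dv]
          rw [heq]
          rcases le_or_gt (2*R) x with h2R | h2R
          · have hz : pST ((2*R - x)/R) = 0 := by
              apply Stmt18Aux.pST_eq_zero
              left
              apply div_nonpos_of_nonpos_of_nonneg <;> linarith
            rw [hz]
            simpa using h2Cx
          · rw [abs_mul, abs_inv, abs_of_pos hR0]
            calc |pST ((2*R - x)/R)| * R⁻¹ ≤ C * R⁻¹ :=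
                  mul_le_mul_of_nonneg_right (hpC _) (inv_nonneg.mpr hR0.le)
              _ = C/R := (div_eq_mul_inv _ _).symm
              _ ≤ 2*C/x := by
                  rw [div_le_div_iff₀ hR0 hx0]
                  nlinarith [mul_le_mul_of_nonneg_left h2R.le hC0]
        have hψdd : |Stmt18Aux.ψdd ε R x| ≤ 4*C/(x*x) := by
          have heq : Stmt18Aux.ψdd ε R x = -(qST ((2*R-x)/R) * R⁻¹ * R⁻¹) := by
            simp only [Stmt18Aux.ψdd, Stmt18Aux.c2dd, hc1v, hc1dv, hc1ddv, one_mul,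
              zero_mul, mul_zero, zero_add, add_zero]
            ring
          rw [heq, abs_neg]
          rcases le_or_gt (2*R) x with h2R | h2R
          · have hz : qST ((2*R - x)/R) = 0 := by
              apply Stmt18Aux.qST_eq_zero
              left
              apply div_nonpos_of_nonpos_of_nonneg <;> linarith
            rw [hz]
            simpa using h4Cx
          · rw [abs_mul, abs_mul, abs_inv, abs_of_pos hR0]
            have hstep : |qST ((2*R - x)/R)| * R⁻¹ * R⁻¹ ≤ C * R⁻¹ * R⁻¹ := by
              apply mul_le_mul_of_nonneg_right _ (inv_nonneg.mpr hR0.le)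
              exact mul_le_mul_of_nonneg_right (hqC _) (inv_nonneg.mpr hR0.le)
            apply le_trans hstep
            have heq2 : C * R⁻¹ * R⁻¹ = C/(R*R) := by
              field_simp
            rw [heq2, div_le_div_iff₀ (by positivity) (by positivity)]
            have hxx : x*x ≤ 4*(R*R) := by nlinarith
            nlinarith [mul_le_mul_of_nonneg_left hxx hC0]
        have hbC := Stmt18Aux.boundC μ C x hμ hC0 hx1
          (g x) (deriv g x) (deriv (deriv g) x)
          (Stmt18Aux.ψ ε R x) (Stmt18Aux.ψd ε R x) (Stmt18Aux.ψdd ε R x)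
          hψ0 hψd hψdd
        have hGbx : Gb x = (64*C^2+3) * J x := by
          simp only [hGbdef]
          rw [Set.indicator_of_notMem (by simp only [Set.mem_Ioc, not_and_or, not_le]; right; linarith),
            Set.indicator_of_mem (Set.mem_Ioi.mpr hcR)]
          ring
        rw [hGbx]
        simp only [hJdef]
        linarith [hbC]
  -- integrability of the majorant
  have hJIoc : IntegrableOn J (Set.Ioc 0 (2*ε)) volume :=
    hJint.mono_set Set.Ioc_subset_Ioi_self
  have hJIoiR : IntegrableOn J (Set.Ioi R) volume :=
    hJint.mono_set (fun x hx => lt_of_lt_of_le (lt_of_lt_of_le one_pos hR1) (le_of_lt hx))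
  have hpart1 : Integrable ((Set.Ioc 0 (2*ε)).indicator (fun x => 3 * J x + Kc)) volume := by
    apply IntegrableOn.integrable_indicator _ measurableSet_Ioc
    apply Integrable.add (hJIoc.const_mul 3)
    apply integrableOn_const
    rw [Real.volume_Ioc]
    exact ENNReal.ofReal_ne_top
    exact enorm_ne_top
  have hpart2 : Integrable ((Set.Ioi R).indicator (fun x => (64*C^2+3) * J x)) volume :=
    IntegrableOn.integrable_indicator (hJIoiR.const_mul _) measurableSet_Ioi
  have hGint : IntegrableOn Gb (Set.Ioi 0) volume :=
    (hpart1.add hpart2).integrableOn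
  -- measurability of the pieces
  have hrp : ∀ c : ℝ, AEStronglyMeasurable (fun x : ℝ => x ^ c)
      (volume.restrict (Set.Ioi 0)) := by
    intro c
    apply ContinuousOn.aestronglyMeasurable _ measurableSet_Ioi
    intro x hx
    exact (Real.continuousAt_rpow_const x c (Or.inl (ne_of_gt hx))).continuousWithinAt
  have hmeas0 : AEStronglyMeasurable
      (fun x => (deriv (deriv u) x) ^ 2 * x ^ (μ + 1)) (volume.restrict (Set.Ioi 0)) :=
    (((measurable_deriv _).pow_const 2).aestronglyMeasurable).mul (hrp (μ+1))
  have hmeas1 : AEStronglyMeasurable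
      (fun x => (deriv u x) ^ 2 * (x + 1) * x ^ μ) (volume.restrict (Set.Ioi 0)) :=
    ((((measurable_deriv _).pow_const 2).aestronglyMeasurable).mul
      (continuous_id.add continuous_const).aestronglyMeasurable).mul (hrp μ)
  have hmeas2 : AEStronglyMeasurable
      (fun x => (u x) ^ 2 * x ^ (μ - 1)) (volume.restrict (Set.Ioi 0)) := by
    have hucont : ContinuousOn u (Set.Ioi 0) :=
      hg.continuousOn.sub hsmooth.continuous.continuousOn
    exact ((hucont.pow 2).aestronglyMeasurable measurableSet_Ioi).mul (hrp (μ-1))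
  -- nonnegativity of the pieces on Ioi 0
  have hnn0 : ∀ x ∈ Set.Ioi (0:ℝ), 0 ≤ (deriv (deriv u) x) ^ 2 * x ^ (μ + 1) :=
    fun x hx => mul_nonneg (sq_nonneg _) (Real.rpow_nonneg (le_of_lt hx) _)
  have hnn1 : ∀ x ∈ Set.Ioi (0:ℝ), 0 ≤ (deriv u x) ^ 2 * (x + 1) * x ^ μ := by
    intro x hx
    have : (0:ℝ) < x := hx
    have h1 : (0:ℝ) ≤ x + 1 := by linarith
    exact mul_nonneg (mul_nonneg (sq_nonneg _) h1) (Real.rpow_nonneg (le_of_lt hx) _)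
  have hnn2 : ∀ x ∈ Set.Ioi (0:ℝ), 0 ≤ (u x) ^ 2 * x ^ (μ - 1) :=
    fun x hx => mul_nonneg (sq_nonneg _) (Real.rpow_nonneg (le_of_lt hx) _)
  -- integrability of the pieces
  have hbound : ∀ (f : ℝ → ℝ), AEStronglyMeasurable f (volume.restrict (Set.Ioi 0)) →
      (∀ x ∈ Set.Ioi (0:ℝ), 0 ≤ f x) →
      (∀ x ∈ Set.Ioi (0:ℝ), f x ≤ Gb x) →
      IntegrableOn f (Set.Ioi 0) volume := by
    intro f hmf hnnf hlef
    apply Integrable.mono' hGint hmf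
    rw [ae_restrict_iff' measurableSet_Ioi]
    refine Eventually.of_forall fun x hx => ?_
    rw [Real.norm_eq_abs, abs_of_nonneg (hnnf x hx)]
    exact hlef x hx
  have hint0 : IntegrableOn (fun x => (deriv (deriv u) x) ^ 2 * x ^ (μ + 1))
      (Set.Ioi 0) volume := by
    apply hbound _ hmeas0 hnn0
    intro x hx
    have := claim x hx
    linarith [hnn1 x hx, hnn2 x hx]
  have hint1 : IntegrableOn (fun x => (deriv u x) ^ 2 * (x + 1) * x ^ μ)
      (Set.Ioi 0) volume := by
    apply hbound _ hmeas1 hnn1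
    intro x hx
    have := claim x hx
    linarith [hnn0 x hx, hnn2 x hx]
  have hint2 : IntegrableOn (fun x => (u x) ^ 2 * x ^ (μ - 1)) (Set.Ioi 0) volume := by
    apply hbound _ hmeas2 hnn2
    intro x hx
    have := claim x hx
    linarith [hnn0 x hx, hnn1 x hx]
  -- assemble the integrals
  have hsum : (∫ x in Set.Ioi (0:ℝ), (deriv (deriv u) x) ^ 2 * x ^ (μ + 1))
      + (∫ x in Set.Ioi (0:ℝ), (deriv u x) ^ 2 * (x + 1) * x ^ μ)
      + (∫ x in Set.Ioi (0:ℝ), (u x) ^ 2 * x ^ (μ - 1))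
      = ∫ x in Set.Ioi (0:ℝ), ((deriv (deriv u) x) ^ 2 * x ^ (μ + 1)
        + (deriv u x) ^ 2 * (x + 1) * x ^ μ + (u x) ^ 2 * x ^ (μ - 1)) := by
    have h01 : IntegrableOn (fun x => (deriv (deriv u) x) ^ 2 * x ^ (μ + 1)
        + (deriv u x) ^ 2 * (x + 1) * x ^ μ) (Set.Ioi 0) volume := hint0.add hint1
    rw [← integral_add hint0 hint1, ← integral_add h01 hint2]
  have hle : (∫ x in Set.Ioi (0:ℝ), ((deriv (deriv u) x) ^ 2 * x ^ (μ + 1)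
      + (deriv u x) ^ 2 * (x + 1) * x ^ μ + (u x) ^ 2 * x ^ (μ - 1)))
      ≤ ∫ x in Set.Ioi (0:ℝ), Gb x :=
    setIntegral_mono_on ((hint0.add hint1).add hint2) hGint measurableSet_Ioi claim
  have hGeval : (∫ x in Set.Ioi (0:ℝ), Gb x)
      = (3 * (∫ x in Set.Ioc 0 (2*ε), J x) + Kc * (2*ε))
        + (64*C^2+3) * (∫ x in Set.Ioi R, J x) := by
    simp only [hGbdef]
    rw [integral_add (hpart1.integrableOn) (hpart2.integrableOn)]
    congr 1
    · rw [setIntegral_indicator measurableSet_Ioc]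
      have h : Set.Ioi (0:ℝ) ∩ Set.Ioc 0 (2*ε) = Set.Ioc 0 (2*ε) :=
        Set.inter_eq_right.mpr (fun x hx => hx.1)
      rw [h, integral_add (hJIoc.const_mul 3) (integrableOn_const (by
        rw [Real.volume_Ioc]; exact ENNReal.ofReal_ne_top))]
      congr 1
      · exact integral_const_mul _ _
      · rw [setIntegral_const, Real.volume_real_Ioc_of_le (by linarith : (0:ℝ) ≤ 2*ε), smul_eq_mul]
        ring
    · rw [setIntegral_indicator measurableSet_Ioi]
      have h : Set.Ioi (0:ℝ) ∩ Set.Ioi R = Set.Ioi R :=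
        Set.inter_eq_right.mpr (fun x hx =>
          lt_of_lt_of_le (lt_of_lt_of_le one_pos hR1) (le_of_lt hx))
      rw [h]
      exact integral_const_mul _ _
  -- final numerics
  have hεK' : Kc * (2*ε) < δ/4 := hεK
  have hεhead' : 3 * (∫ x in Set.Ioc 0 (2*ε), J x) < δ/4 := hεhead
  calc (∫ x in Set.Ioi (0:ℝ), (deriv (deriv u) x) ^ 2 * x ^ (μ + 1))
      + (∫ x in Set.Ioi (0:ℝ), (deriv u x) ^ 2 * (x + 1) * x ^ μ)
      + (∫ x in Set.Ioi (0:ℝ), (u x) ^ 2 * x ^ (μ - 1))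
      ≤ ∫ x in Set.Ioi (0:ℝ), Gb x := by rw [hsum]; exact hle
    _ = (3 * (∫ x in Set.Ioc 0 (2*ε), J x) + Kc * (2*ε))
        + (64*C^2+3) * (∫ x in Set.Ioi R, J x) := hGeval
    _ < (δ/4 + δ/4) + δ/2 := add_lt_add (add_lt_add hεhead' hεK') hRtail
    _ = δ := by ring

end
end

section
/- Let g ∈ C_c^∞((0,∞)) (smooth and compactly supported in (0,∞)), let λ, β ∈ ℝ, and write ∂h for the function x ↦ x·h'(x). Then ∫₀^∞ (∂²(x^λ g))² x^{β−1} dx = ∫₀^∞ ( λ²(λ+β)² g² − 2λ(λ+β)(∂g)² + (∂²g)² ) x^{2λ+β−1} dx, where x^λ g denotes the function x ↦ x^λ g(x) and ∂² means ∂ applied twice. -/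
open MeasureTheory

noncomputable section

/-- The operator `∂h(x) = x · h'(x)`. -/
def Dop (h : ℝ → ℝ) : ℝ → ℝ := fun x => x * deriv h x

/-- Auxiliary "potential" function for the integration by parts. -/
def Paux (g : ℝ → ℝ) (lam β : ℝ) : ℝ → ℝ := fun x =>
  -lam^2*β*(g x * g x) + 2*lam^2*(g x * Dop g x) + 2*lam*(Dop g x * Dop g x)

/-- Pointwise derivative of `Paux`. -/
def Pdaux (g : ℝ → ℝ) (lam β : ℝ) : ℝ → ℝ := fun x =>
  -lam^2*β*(deriv g x * g x + g x * deriv g x)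
    + 2*lam^2*(deriv g x * Dop g x + g x * deriv (Dop g) x)
    + 2*lam*(deriv (Dop g) x * Dop g x + Dop g x * deriv (Dop g) x)

/-- Integration-by-parts identity for the transformation `g ↦ x^λ g`:
`∫₀^∞ (∂²(x^λ g))² x^{β−1} dx
  = ∫₀^∞ (λ²(λ+β)² g² − 2λ(λ+β)(∂g)² + (∂²g)²) x^{2λ+β−1} dx`. -/
theorem stmt_19 (g : ℝ → ℝ) (hg : ContDiff ℝ (⊤ : ℕ∞) g)
    (hsupp : HasCompactSupport g) (hsub : tsupport g ⊆ Set.Ioi 0)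
    (lam β : ℝ) :
    (∫ x in Set.Ioi (0 : ℝ),
        (Dop (Dop (fun y => y ^ lam * g y)) x) ^ 2 * x ^ (β - 1)) =
      ∫ x in Set.Ioi (0 : ℝ),
        (lam ^ 2 * (lam + β) ^ 2 * (g x) ^ 2 -
          2 * lam * (lam + β) * (Dop g x) ^ 2 + (Dop (Dop g) x) ^ 2) *
          x ^ (2 * lam + β - 1) := by
  -- a positive lower bound for the support
  obtain ⟨ε, hε0, hεK⟩ : ∃ ε > (0:ℝ), tsupport g ⊆ Set.Ici ε := by
    rcases Set.eq_empty_or_nonempty (tsupport g) with h | h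
    · exact ⟨1, one_pos, by simp [h]⟩
    · obtain ⟨a, haK, hmin⟩ := hsupp.exists_isLeast h
      exact ⟨a, hsub haK, fun x hx => hmin hx⟩
  -- smoothness facts
  have hg' : ContDiff ℝ (⊤ : ℕ∞) (deriv g) := (contDiff_infty_iff_deriv.mp hg).2
  have hG : ContDiff ℝ (⊤ : ℕ∞) (Dop g) := contDiff_id.mul hg'
  have hG' : ContDiff ℝ (⊤ : ℕ∞) (deriv (Dop g)) := (contDiff_infty_iff_deriv.mp hG).2
  have hdg : ∀ x, HasDerivAt g (deriv g x) x := fun x => (hg.differentiable (by simp) x).hasDerivAt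
  have hdG : ∀ x, HasDerivAt (Dop g) (deriv (Dop g) x) x :=
    fun x => (hG.differentiable (by simp) x).hasDerivAt
  -- vanishing near 0
  have hg0 : ∀ x < ε, g x = 0 := fun x hx =>
    image_eq_zero_of_notMem_tsupport (fun hmem => absurd (hεK hmem) (not_le.mpr hx))
  have hdg0 : ∀ x < ε, deriv g x = 0 := by
    intro x hx
    by_contra h
    exact absurd (hεK (support_deriv_subset (Function.mem_support.mpr h))) (not_le.mpr hx)
  have hG0 : ∀ x < ε, Dop g x = 0 := by
    intro x hx; simp [Dop, hdg0 x hx]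
  have htsG : tsupport (Dop g) ⊆ tsupport g := by
    apply closure_minimal _ (isClosed_tsupport g)
    intro x hx
    have h : deriv g x ≠ 0 := fun h0 => hx (by simp [Dop, h0])
    exact support_deriv_subset (Function.mem_support.mpr h)
  have hdG0 : ∀ x < ε, deriv (Dop g) x = 0 := by
    intro x hx
    by_contra h
    exact absurd (hεK (htsG (support_deriv_subset (Function.mem_support.mpr h))))
      (not_le.mpr hx)
  have hG20 : ∀ x < ε, Dop (Dop g) x = 0 := by
    intro x hx; simp [Dop, hdG0 x hx]
  -- P and its derivative
  have hP0 : ∀ x < ε, Paux g lam β x = 0 := by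
    intro x hx; simp [Paux, hg0 x hx, hG0 x hx]
  have hPd0 : ∀ x < ε, Pdaux g lam β x = 0 := by
    intro x hx; simp [Pdaux, hg0 x hx, hG0 x hx]
  have hPd : ∀ x, HasDerivAt (Paux g lam β) (Pdaux g lam β x) x := by
    intro x
    exact ((((hdg x).mul (hdg x)).const_mul (-lam^2*β)).add
      (((hdg x).mul (hdG x)).const_mul (2*lam^2))).add
      (((hdG x).mul (hdG x)).const_mul (2*lam))
  have hPc : Continuous (Paux g lam β) := by
    have := hg.continuous; have := hG.continuous
    unfold Paux; fun_prop
  have hPdc : Continuous (Pdaux g lam β) := by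
    have := hg.continuous; have := hG.continuous
    have := hg'.continuous; have := hG'.continuous
    unfold Pdaux; fun_prop
  -- w and its derivative D
  set w : ℝ → ℝ := fun x => Paux g lam β x * x ^ (2*lam+β) with hw
  set D : ℝ → ℝ := fun x =>
    (x * Pdaux g lam β x + (2*lam+β) * Paux g lam β x) * x ^ (2*lam+β-1) with hDdef
  have hwD : ∀ x, HasDerivAt w (D x) x := by
    intro x
    rcases lt_or_ge 0 x with hx | hx
    · have hxr : HasDerivAt (fun y : ℝ => y ^ (2*lam+β)) ((2*lam+β) * x ^ (2*lam+β-1)) x :=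
        Real.hasDerivAt_rpow_const (Or.inl hx.ne')
      have h := (hPd x).mul hxr
      have hxx : x ^ (2*lam+β) = x ^ (2*lam+β-1) * x := by
        rw [← Real.rpow_add_one hx.ne' (2*lam+β-1)]; ring_nf
      refine h.congr_deriv (Eq.symm ?_)
      rw [hDdef]; simp only; rw [hxx]; ring
    · have hxε : x < ε := lt_of_le_of_lt hx hε0
      have hD0 : D x = 0 := by
        rw [hDdef]; simp [hP0 x hxε, hPd0 x hxε]
      rw [hD0]
      have hev : (fun _ : ℝ => (0:ℝ)) =ᶠ[nhds x] w := by
        filter_upwards [Iio_mem_nhds hxε] with y hy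
        rw [hw]; simp [hP0 y hy]
      exact (hasDerivAt_const x (0:ℝ)).congr_of_eventuallyEq hev.symm
  -- continuity of D
  have hDc : Continuous D := by
    rw [continuous_iff_continuousAt]
    intro x
    rcases lt_or_ge 0 x with hx | hx
    · have h1 : ContinuousAt (fun y : ℝ => y ^ (2*lam+β-1)) x :=
        Real.continuousAt_rpow_const x _ (Or.inl hx.ne')
      exact (((continuous_id.mul hPdc).add (continuous_const.mul hPc)).continuousAt).mul h1
    · have hxε : x < ε := lt_of_le_of_lt hx hε0
      have hev : (fun _ : ℝ => (0:ℝ)) =ᶠ[nhds x] D := by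
        filter_upwards [Iio_mem_nhds hxε] with y hy
        rw [hDdef]; simp [hP0 y hy, hPd0 y hy]
      exact continuousAt_const.congr hev
  have hderivw : deriv w = D := funext fun x => (hwD x).deriv
  have hwC1 : ContDiff ℝ 1 w :=
    contDiff_one_iff_deriv.mpr ⟨fun x => (hwD x).differentiableAt, hderivw ▸ hDc⟩
  have hwsupp : HasCompactSupport w := by
    apply HasCompactSupport.intro hsupp
    intro x hx
    have hP : Paux g lam β x = 0 := by
      have hgx : g x = 0 := image_eq_zero_of_notMem_tsupport hx
      have hGx : Dop g x = 0 := by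
        by_contra h
        exact hx (htsG (subset_closure (Function.mem_support.mpr h)))
      simp [Paux, hgx, hGx]
    rw [hw]; simp [hP]
  -- key: integral of D over (0,∞) vanishes
  have hintD : (∫ x in Set.Ioi (0:ℝ), D x) = 0 := by
    have h := HasCompactSupport.integral_Ioi_deriv_eq hwC1 hwsupp 0
    rw [hderivw] at h
    rw [h, hw]; simp [hP0 0 hε0]
  -- pointwise description of the left integrand
  have fA : ∀ y ∈ Set.Ioi (0:ℝ),
      Dop (fun z => z ^ lam * g z) y = y ^ lam * (lam * g y + Dop g y) := by
    intro y hy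
    have hy' : (0:ℝ) < y := hy
    have hf : HasDerivAt (fun z : ℝ => z ^ lam * g z)
        ((lam * y ^ (lam-1)) * g y + y ^ lam * deriv g y) y :=
      (Real.hasDerivAt_rpow_const (Or.inl hy'.ne')).mul (hdg y)
    have hyy : y ^ lam = y ^ (lam-1) * y := by
      rw [← Real.rpow_add_one hy'.ne' (lam-1)]; ring_nf
    show y * deriv (fun z : ℝ => z ^ lam * g z) y = _
    rw [hf.deriv]
    show _ = y ^ lam * (lam * g y + y * deriv g y)
    rw [hyy]; ring
  have fB : ∀ y ∈ Set.Ioi (0:ℝ),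
      Dop (Dop (fun z => z ^ lam * g z)) y
        = y ^ lam * (lam^2 * g y + 2*lam*(Dop g y) + Dop (Dop g) y) := by
    intro y hy
    have hy' : (0:ℝ) < y := hy
    have heq : (Dop (fun z => z ^ lam * g z)) =ᶠ[nhds y]
        (fun z => z ^ lam * (lam * g z + Dop g z)) :=
      Filter.eventuallyEq_of_mem (Ioi_mem_nhds hy') fA
    have hh : HasDerivAt (fun z : ℝ => z ^ lam * (lam * g z + Dop g z))
        ((lam * y ^ (lam-1)) * (lam * g y + Dop g y)
          + y ^ lam * (lam * deriv g y + deriv (Dop g) y)) y :=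
      (Real.hasDerivAt_rpow_const (Or.inl hy'.ne')).mul (((hdg y).const_mul lam).add (hdG y))
    have hyy : y ^ lam = y ^ (lam-1) * y := by
      rw [← Real.rpow_add_one hy'.ne' (lam-1)]; ring_nf
    show y * deriv (Dop (fun z => z ^ lam * g z)) y = _
    rw [heq.deriv_eq, hh.deriv]
    show _ = y ^ lam * (lam^2 * g y + 2*lam*(y * deriv g y) + y * deriv (Dop g) y)
    show y * ((lam * y ^ (lam-1)) * (lam * g y + y * deriv g y)
          + y ^ lam * (lam * deriv g y + deriv (Dop g) y)) = _
    rw [hyy]; ring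
  -- the right-hand integrand
  set R : ℝ → ℝ := fun x =>
    (lam ^ 2 * (lam + β) ^ 2 * (g x) ^ 2 -
      2 * lam * (lam + β) * (Dop g x) ^ 2 + (Dop (Dop g) x) ^ 2) *
      x ^ (2 * lam + β - 1) with hRdef
  have hRc : Continuous R := by
    rw [continuous_iff_continuousAt]
    intro x
    rcases lt_or_ge 0 x with hx | hx
    · have h1 : ContinuousAt (fun y : ℝ => y ^ (2*lam+β-1)) x :=
        Real.continuousAt_rpow_const x _ (Or.inl hx.ne')
      have h2 : Continuous (fun x => lam ^ 2 * (lam + β) ^ 2 * (g x) ^ 2 -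
          2 * lam * (lam + β) * (Dop g x) ^ 2 + (Dop (Dop g) x) ^ 2) := by
        have := hg.continuous; have := hG.continuous
        have hGG : Continuous (Dop (Dop g)) := continuous_id.mul hG'.continuous
        fun_prop
      exact h2.continuousAt.mul h1
    · have hxε : x < ε := lt_of_le_of_lt hx hε0
      have hev : (fun _ : ℝ => (0:ℝ)) =ᶠ[nhds x] R := by
        filter_upwards [Iio_mem_nhds hxε] with y hy
        rw [hRdef]; simp [hg0 y hy, hG0 y hy, hG20 y hy]
      exact continuousAt_const.congr hev
  have hRsupp : HasCompactSupport R := by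
    apply HasCompactSupport.intro hsupp
    intro x hx
    have hgx : g x = 0 := image_eq_zero_of_notMem_tsupport hx
    have hGx : Dop g x = 0 := by
      by_contra h
      exact hx (htsG (subset_closure (Function.mem_support.mpr h)))
    have hG2x : Dop (Dop g) x = 0 := by
      have : deriv (Dop g) x = 0 := by
        by_contra h
        exact hx (htsG (support_deriv_subset (Function.mem_support.mpr h)))
      simp [Dop, this]
    rw [hRdef]; simp [hgx, hGx, hG2x]
  have hRint : IntegrableOn R (Set.Ioi (0:ℝ)) :=
    (hRc.integrable_of_hasCompactSupport hRsupp).integrableOn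
  have hDint : IntegrableOn D (Set.Ioi (0:ℝ)) := by
    have hDsupp : HasCompactSupport D := by
      apply HasCompactSupport.intro hsupp
      intro x hx
      have hgx : g x = 0 := image_eq_zero_of_notMem_tsupport hx
      have hGx : Dop g x = 0 := by
        by_contra h
        exact hx (htsG (subset_closure (Function.mem_support.mpr h)))
      have hdgx : deriv g x = 0 := by
        by_contra h
        exact hx (support_deriv_subset (Function.mem_support.mpr h))
      have hdGx : deriv (Dop g) x = 0 := by
        by_contra h
        exact hx (htsG (support_deriv_subset (Function.mem_support.mpr h)))
      rw [hDdef]; simp [Paux, Pdaux, hgx, hGx, hdgx, hdGx]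
    exact (hDc.integrable_of_hasCompactSupport hDsupp).integrableOn
  -- pointwise identity
  have key : ∀ x ∈ Set.Ioi (0:ℝ),
      (Dop (Dop (fun y => y ^ lam * g y)) x) ^ 2 * x ^ (β - 1) = R x + D x := by
    intro x hx
    have hx' : (0:ℝ) < x := hx
    rw [fB x hx, hRdef, hDdef]
    have hmul : x ^ (2*lam + β - 1) = x ^ lam * x ^ lam * x ^ (β-1) := by
      rw [← Real.rpow_add hx', ← Real.rpow_add hx']; ring_nf
    simp only
    rw [hmul]
    simp only [Paux, Pdaux, Dop]
    ring
  calc (∫ x in Set.Ioi (0:ℝ),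
        (Dop (Dop (fun y => y ^ lam * g y)) x) ^ 2 * x ^ (β - 1))
      = ∫ x in Set.Ioi (0:ℝ), (R x + D x) := setIntegral_congr_fun measurableSet_Ioi key
    _ = (∫ x in Set.Ioi (0:ℝ), R x) + ∫ x in Set.Ioi (0:ℝ), D x :=
        integral_add hRint hDint
    _ = ∫ x in Set.Ioi (0:ℝ), R x := by rw [hintD, add_zero]
end
end
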